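/- Let ψ₁⁰, ψ₂⁰ ∈ (ℝⁿ)* be row vectors satisfying ψ₂⁰(A+B) = 0 and ψ₁⁰(A+B) = ψ₂⁰(B+I). Define row vectors ψ̂₂, ψ̂₁ ∈ (ℝ^{(m+1)n})* blockwise by: ψ̂₂ has block 0 equal to ψ₂⁰ and blocks 1,…,m all equal to εψ₂⁰B; ψ̂₁ has block 0 equal to mψ₁⁰ and block j equal to ψ₁⁰B − (m+1−j)εψ₂⁰B for j = 1,…,m. Then ψ̂₂(C − I) = 0 and ψ̂₁(C − I) = ψ̂₂, i.e. ψ̂₂C = ψ̂₂ and ψ̂₁C = ψ̂₁ + ψ̂₂, so (ψ̂₂, ψ̂₁) is a left Jordan chain of C for the eigenvalue 1. -/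

import Mathlib

open Matrix

/-- The Euler companion matrix `C` of the forward Euler discretization
`z_{k+1} = z_k + ε A z_k + ε B z_{k-m}`, with step size `ε = 1/m`, written in
`(m+1) × (m+1)` blocks of size `n × n`: the first block row is
`(I + εA, 0, …, 0, εB)`, the subdiagonal blocks are `I`, all other blocks vanish. -/
noncomputable def eulerC (n m : ℕ) (A B : Matrix (Fin n) (Fin n) ℝ) :
    Matrix (Fin (m+1) × Fin n) (Fin (m+1) × Fin n) ℝ :=
  fun ip jq =>
    if ip.1 = 0 then
      (if jq.1 = 0 then (if ip.2 = jq.2 then 1 else 0) + (1 / (m : ℝ)) * A ip.2 jq.2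
       else if (jq.1 : ℕ) = m then (1 / (m : ℝ)) * B ip.2 jq.2 else 0)
    else if (jq.1 : ℕ) + 1 = (ip.1 : ℕ) then (if ip.2 = jq.2 then 1 else 0) else 0

lemma vecMul_eulerC {n m : ℕ} (A B : Matrix (Fin n) (Fin n) ℝ)
    (ψ : Fin (m+1) × Fin n → ℝ) (j : Fin (m+1)) (q : Fin n) :
    (ψ ᵥ* eulerC n m A B) (j, q) =
      (if j = 0 then ψ (0, q) + (1/(m:ℝ)) * ∑ p, ψ (0,p) * A p q
       else if (j:ℕ) = m then (1/(m:ℝ)) * ∑ p, ψ (0,p) * B p q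
       else 0)
      + (if h : (j:ℕ) < m then ψ (⟨(j:ℕ)+1, by omega⟩, q) else 0) := by
  rw [vecMul, dotProduct]
  rw [Fintype.sum_prod_type, Fin.sum_univ_succ]
  congr 1
  · simp only [eulerC, Fin.isValue, eq_self_iff_true, if_true]
    split_ifs with h1 h2
    · have hq : ψ (0, q) = ∑ x, if x = q then ψ (0, x) else 0 := by simp
      rw [hq, Finset.mul_sum, ← Finset.sum_add_distrib]
      exact Finset.sum_congr rfl fun p _ => by split_ifs <;> ring
    · rw [Finset.mul_sum]
      exact Finset.sum_congr rfl fun p _ => by ring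
    · simp
  · have key : ∀ i : Fin m, ∀ p : Fin n,
        ψ (i.succ, p) * eulerC n m A B (i.succ, p) (j, q) =
        if p = q then (if (j:ℕ) = (i:ℕ) then ψ (i.succ, p) else 0) else 0 := by
      intro i p
      simp only [eulerC, Fin.succ_ne_zero, if_false, Fin.val_succ, add_left_inj]
      split_ifs <;> simp
    simp only [key, Finset.sum_ite_eq', Finset.mem_univ, if_pos]
    by_cases h : (j:ℕ) < m
    · rw [dif_pos h, Finset.sum_eq_single ⟨(j:ℕ), h⟩]
      · simp [Fin.succ, Fin.ext_iff]
      · intro b _ hb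
        rw [if_neg fun hc => hb (Fin.ext hc.symm)]
      · simp
    · rw [dif_neg h]
      apply Finset.sum_eq_zero
      intro i _
      rw [if_neg]
      have := i.isLt
      omega

theorem stmt_4 (n m : ℕ) (hn : 0 < n) (hm : 0 < m) (A B : Matrix (Fin n) (Fin n) ℝ)
    (ψ₁0 ψ₂0 : Fin n → ℝ)
    (h3 : ψ₂0 ᵥ* (A + B) = 0)
    (h4 : ψ₁0 ᵥ* (A + B) = ψ₂0 ᵥ* (B + 1))
    (ψ₁ ψ₂ : Fin (m+1) × Fin n → ℝ)
    (hψ₂ : ψ₂ = fun ip =>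
      if ip.1 = 0 then ψ₂0 ip.2 else (1 / (m : ℝ)) * (ψ₂0 ᵥ* B) ip.2)
    (hψ₁ : ψ₁ = fun ip =>
      if ip.1 = 0 then (m : ℝ) * ψ₁0 ip.2
      else (ψ₁0 ᵥ* B) ip.2 - ((m : ℝ) + 1 - (ip.1 : ℕ)) * (1 / (m : ℝ)) * (ψ₂0 ᵥ* B) ip.2) :
    ψ₂ ᵥ* eulerC n m A B = ψ₂ ∧ ψ₁ ᵥ* eulerC n m A B = ψ₁ + ψ₂ := by
  subst hψ₂ hψ₁
  have hm' : (m:ℝ) ≠ 0 := Nat.cast_ne_zero.mpr hm.ne'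
  have h3' : ∀ q, (∑ p, ψ₂0 p * A p q) + (∑ p, ψ₂0 p * B p q) = 0 := by
    intro q
    have := congrFun h3 q
    simpa [vecMul, dotProduct, Matrix.add_apply, mul_add, Finset.sum_add_distrib] using this
  have h4' : ∀ q, (∑ p, ψ₁0 p * A p q) + (∑ p, ψ₁0 p * B p q)
      = (∑ p, ψ₂0 p * B p q) + ψ₂0 q := by
    intro q
    have := congrFun h4 q
    simpa [vecMul, dotProduct, Matrix.add_apply, Matrix.one_apply, mul_add, mul_ite,
      Finset.sum_add_distrib, Finset.sum_ite_eq'] using this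
  constructor
  · funext jq
    obtain ⟨j, q⟩ := jq
    rw [vecMul_eulerC]
    by_cases hj0 : j = 0
    · subst hj0
      simp only [if_pos rfl, dif_pos (show ((0:Fin (m+1)):ℕ) < m by simpa using hm)]
      simp only [Fin.isValue, Fin.val_zero, zero_add, ne_eq]
      simp [Fin.ext_iff, vecMul, dotProduct]
      have := h3' q
      field_simp
      linarith [this]
    · by_cases hjm : (j:ℕ) = m
      · have hnlt : ¬ (j:ℕ) < m := by omega
        simp only [if_neg hj0, if_pos hjm, dif_neg hnlt]
        simp [hj0, vecMul, dotProduct]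
      · have hlt : (j:ℕ) < m := by
          have := j.isLt; omega
        have hne : (⟨(j:ℕ)+1, by omega⟩ : Fin (m+1)) ≠ 0 := Fin.ne_of_val_ne (by simp only [Fin.val_zero]; omega)
        simp only [if_neg hj0, if_neg hjm, dif_pos hlt]
        simp [hne, hj0]
  · funext jq
    obtain ⟨j, q⟩ := jq
    rw [vecMul_eulerC]
    by_cases hj0 : j = 0
    · subst hj0
      simp only [dif_pos (show ((0:Fin (m+1)):ℕ) < m by simpa using hm)]
      simp only [if_pos rfl, Fin.val_zero, zero_add]
      rw [if_neg (Fin.ne_of_val_ne (by simp only [Fin.val_zero]; omega))]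
      simp [vecMul, dotProduct, Pi.add_apply, ← Finset.mul_sum]
      have e1 : ∑ x, (m:ℝ) * ψ₁0 x * A x q = (m:ℝ) * ∑ x, ψ₁0 x * A x q := by
        rw [Finset.mul_sum]
        exact Finset.sum_congr rfl fun x _ => by ring
      rw [e1, inv_mul_cancel_left₀ hm', mul_inv_cancel₀ hm', one_mul]
      linear_combination h4' q
    · by_cases hjm : (j:ℕ) = m
      · have hnlt : ¬ (j:ℕ) < m := by omega
        simp only [if_neg hj0, if_pos hjm, dif_neg hnlt]
        simp [hj0, vecMul, dotProduct, ← Finset.mul_sum, Pi.add_apply, hjm]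
        have e1 : ∑ x, (m:ℝ) * ψ₁0 x * B x q = (m:ℝ) * ∑ x, ψ₁0 x * B x q := by
          rw [Finset.mul_sum]
          exact Finset.sum_congr rfl fun x _ => by ring
        rw [e1, inv_mul_cancel_left₀ hm']
      · have hlt : (j:ℕ) < m := by
          have := j.isLt; omega
        have hne : (⟨(j:ℕ)+1, by omega⟩ : Fin (m+1)) ≠ 0 := Fin.ne_of_val_ne (by simp only [Fin.val_zero]; omega)
        simp only [if_neg hj0, if_neg hjm, dif_pos hlt]
        simp [hne, hj0, Pi.add_apply]
        ring
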